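/- For all real x₁, x₂, the Euclidean inner product of the layer-normalized trigonometric embeddings satisfies LN(E_trig(x₁)) · LN(E_trig(x₂)) = 4·cos(x₁ − x₂). -/

import Mathlib

/-- Population mean of a vector `v ∈ ℝ^d`: `μ(v) = (1/d)·Σᵢ vᵢ`. -/
noncomputable def popMean {d : ℕ} (v : Fin d → ℝ) : ℝ := (∑ i, v i) / d

/-- Population standard deviation of a vector `v ∈ ℝ^d`:
`σ(v) = √((1/d)·Σᵢ (vᵢ − μ(v))²)`. -/
noncomputable def popStd {d : ℕ} (v : Fin d → ℝ) : ℝ :=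
  Real.sqrt ((∑ i, (v i - popMean v) ^ 2) / d)

/-- LayerNorm with unit gain and zero bias: `LN(v) = (v − μ(v)·𝟙)/σ(v)`. -/
noncomputable def layerNorm {d : ℕ} (v : Fin d → ℝ) : Fin d → ℝ :=
  fun i => (v i - popMean v) / popStd v

/-- Trigonometric positional embedding `E_trig(x) = (cos x, −cos x, sin x, −sin x)`. -/
noncomputable def Etrig (x : ℝ) : Fin 4 → ℝ :=
  ![Real.cos x, -Real.cos x, Real.sin x, -Real.sin x]

lemma popMean_etrig (x : ℝ) : popMean (Etrig x) = 0 := by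
  simp [popMean, Etrig, Fin.sum_univ_four]

lemma popStd_etrig (x : ℝ) : popStd (Etrig x) = Real.sqrt (1/2) := by
  have h := Real.sin_sq_add_cos_sq x
  rw [popStd, popMean_etrig]
  congr 1
  simp [Etrig, Fin.sum_univ_four]
  ring_nf
  nlinarith [h]

/-- The Euclidean inner product of the layer-normalized trigonometric embeddings
satisfies `LN(E_trig(x₁)) · LN(E_trig(x₂)) = 4·cos(x₁ − x₂)`. -/
theorem etrig_layerNorm_dot (x₁ x₂ : ℝ) :
    ∑ i, layerNorm (Etrig x₁) i * layerNorm (Etrig x₂) i = 4 * Real.cos (x₁ - x₂) := by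
  have hs : Real.sqrt (1/2) * Real.sqrt (1/2) = 1/2 :=
    Real.mul_self_sqrt (by norm_num)
  simp only [layerNorm, popMean_etrig, popStd_etrig, sub_zero, Fin.sum_univ_four,
    Real.cos_sub]
  simp only [Etrig, Matrix.cons_val_zero, Matrix.cons_val_one, Matrix.head_cons,
    Matrix.cons_val_two, Matrix.tail_cons, Matrix.cons_val_three]
  have hne : Real.sqrt (1/2) ≠ 0 := by positivity
  field_simp
  ring_nf
  rw [Real.sq_sqrt (by norm_num : (0:ℝ) ≤ 1/2)]
  ring
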